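/- Let T > 0, k₂ ∈ ℝ, x₁ > 0 and 0 ≤ t ≤ T. Suppose h : [0,T] → ℂ is C¹. For R > |k₂|, parametrize the quarter circle C̃_R = {R e^{iθ} : 0 ≤ θ ≤ π/2} in the first quadrant of the complex plane. Then |∫_{C̃_R} e^{i k₁ x₁ - i(k₁² + k₂²)t} k₁ ∫_t^T e^{i(k₁² + k₂²)t'} h(t') dt' dk₁| ≤ C(h) · R²/(R² - k₂²) · (π/(2 R x₁)) (1 - e^{-R x₁}), where C(h) = 2 sup_{[0,T]}|h| + ∫₀^T |h'|. In particular the contour integral tends to 0 as R → ∞. -/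

import Mathlib

open Complex Real Filter Topology Set

/-- The integral over the quarter circle `C̃_R = {R e^{iθ} : 0 ≤ θ ≤ π/2}` of
`e^{i k₁ x₁ - i(k₁²+k₂²)t} k₁ ∫_t^T e^{i(k₁²+k₂²)t'} h(t') dt' dk₁`,
parametrized by `k₁ = R e^{iθ}`, `dk₁ = i k₁ dθ`. -/
noncomputable def arcIntegral (k₂ x₁ t T : ℝ) (h : ℝ → ℂ) (R : ℝ) : ℂ :=
  ∫ θ in (0:ℝ)..(π / 2),
    (fun k₁ : ℂ =>
        Complex.exp (Complex.I * k₁ * (x₁ : ℂ) -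
            Complex.I * (k₁ ^ 2 + (k₂ : ℂ) ^ 2) * (t : ℂ)) *
          k₁ *
          (∫ t' in t..T,
            Complex.exp (Complex.I * (k₁ ^ 2 + (k₂ : ℂ) ^ 2) * (t' : ℂ)) * h t') *
          (Complex.I * k₁))
      ((R : ℂ) * Complex.exp (Complex.I * (θ : ℂ)))

section Aux
open MeasureTheory

lemma exp_deriv_aux (q : ℂ) (u : ℝ) :
    HasDerivAt (fun s : ℝ => Complex.exp (Complex.I * q * s))
      (Complex.I * q * Complex.exp (Complex.I * q * u)) u := by
  have h1 : HasDerivAt (fun z : ℂ => Complex.exp (Complex.I * q * z))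
      (Complex.exp (Complex.I * q * u) * (Complex.I * q * 1)) (u : ℂ) :=
    ((hasDerivAt_id (u : ℂ)).const_mul (Complex.I * q)).cexp
  simpa [mul_comm] using h1.comp_ofReal

lemma cont_exp_aux (q : ℂ) : Continuous (fun u : ℝ => Complex.exp (Complex.I * q * u)) :=
  Complex.continuous_exp.comp (continuous_const.mul Complex.continuous_ofReal)

lemma parts_aux (T t : ℝ) (hT : 0 < T) (ht0 : 0 ≤ t) (htT : t ≤ T)
    (h : ℝ → ℂ) (hh : ContDiffOn ℝ 1 h (Icc 0 T)) (q : ℂ) (hq : q ≠ 0) :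
    ∫ t' in t..T, Complex.exp (Complex.I * q * t') * h t' =
      (Complex.exp (Complex.I * q * T) * h T - Complex.exp (Complex.I * q * t) * h t
        - ∫ t' in t..T, Complex.exp (Complex.I * q * t') * derivWithin h (Icc 0 T) t') /
        (Complex.I * q) := by
  set f' := derivWithin h (Icc 0 T) with hf'
  have hIq : Complex.I * q ≠ 0 := mul_ne_zero Complex.I_ne_zero hq
  have hsub : Icc t T ⊆ Icc 0 T := Icc_subset_Icc ht0 le_rfl
  have hch : ContinuousOn h (Icc t T) := hh.continuousOn.mono hsub
  have hcf' : ContinuousOn f' (Icc t T) :=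
    (hh.continuousOn_derivWithin (uniqueDiffOn_Icc hT) le_rfl).mono hsub
  have hexp := cont_exp_aux q
  have hGcont : ContinuousOn (fun u : ℝ => Complex.exp (Complex.I * q * u) * h u / (Complex.I * q))
      (Icc t T) := (hexp.continuousOn.mul hch).div_const _
  have hGderiv : ∀ u ∈ Ioo t T,
      HasDerivWithinAt (fun u : ℝ => Complex.exp (Complex.I * q * u) * h u / (Complex.I * q))
        (Complex.exp (Complex.I * q * u) * h u +
          Complex.exp (Complex.I * q * u) * f' u / (Complex.I * q)) (Ioi u) u := by
    intro u hu
    have hu' : u ∈ Ioo 0 T := ⟨lt_of_le_of_lt ht0 hu.1, hu.2⟩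
    have hdh : HasDerivAt h (f' u) u := by
      have := (hh.differentiableOn one_ne_zero u (Ioo_subset_Icc_self hu')).hasDerivWithinAt
      exact this.hasDerivAt (Icc_mem_nhds hu'.1 hu'.2)
    have := ((exp_deriv_aux q u).mul hdh).div_const (Complex.I * q)
    have heq : (Complex.I * q * Complex.exp (Complex.I * q * u) * h u +
        Complex.exp (Complex.I * q * u) * f' u) / (Complex.I * q) =
        Complex.exp (Complex.I * q * u) * h u +
          Complex.exp (Complex.I * q * u) * f' u / (Complex.I * q) := by
      field_simp
    rw [heq] at this
    exact this.hasDerivWithinAt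
  have i1 : IntervalIntegrable (fun u : ℝ => Complex.exp (Complex.I * q * u) * h u) volume t T := by
    apply ContinuousOn.intervalIntegrable
    rw [uIcc_of_le htT]; exact hexp.continuousOn.mul hch
  have i2 : IntervalIntegrable (fun u : ℝ => Complex.exp (Complex.I * q * u) * f' u / (Complex.I * q))
      volume t T := by
    apply ContinuousOn.intervalIntegrable
    rw [uIcc_of_le htT]; exact (hexp.continuousOn.mul hcf').div_const _
  have key := intervalIntegral.integral_eq_sub_of_hasDeriv_right_of_le htT hGcont hGderiv
    (i1.add i2)
  rw [intervalIntegral.integral_add i1 i2, intervalIntegral.integral_div] at key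
  rw [eq_div_iff hIq]
  field_simp at key
  linear_combination key

lemma pointwise_bound (T k₂ x₁ t : ℝ) (hT : 0 < T) (hx₁ : 0 < x₁)
    (ht0 : 0 ≤ t) (htT : t ≤ T) (h : ℝ → ℂ) (hh : ContDiffOn ℝ 1 h (Icc 0 T))
    (R θ : ℝ) (hR : |k₂| < R) (hθ0 : 0 ≤ θ) (hθ1 : θ ≤ π / 2) :
    ‖(fun k₁ : ℂ =>
        Complex.exp (Complex.I * k₁ * (x₁ : ℂ) -
            Complex.I * (k₁ ^ 2 + (k₂ : ℂ) ^ 2) * (t : ℂ)) *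
          k₁ *
          (∫ t' in t..T,
            Complex.exp (Complex.I * (k₁ ^ 2 + (k₂ : ℂ) ^ 2) * (t' : ℂ)) * h t') *
          (Complex.I * k₁))
      ((R : ℂ) * Complex.exp (Complex.I * (θ : ℂ)))‖ ≤
      (‖h T‖ + ‖h t‖ + ∫ u in t..T, ‖derivWithin h (Icc 0 T) u‖) *
        (R ^ 2 / (R ^ 2 - k₂ ^ 2)) * Real.exp (-(2 * R * x₁ / π) * θ) := by
  have hR0 : 0 < R := lt_of_le_of_lt (abs_nonneg k₂) hR
  set f' := derivWithin h (Icc 0 T) with hf'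
  set k₁ : ℂ := (R : ℂ) * Complex.exp (Complex.I * θ) with hk₁
  set q : ℂ := k₁ ^ 2 + (k₂ : ℂ) ^ 2 with hqdef
  have hsinθ : 0 ≤ Real.sin θ := Real.sin_nonneg_of_nonneg_of_le_pi hθ0
    (hθ1.trans (by linarith [Real.pi_pos]))
  have hcosθ : 0 ≤ Real.cos θ := Real.cos_nonneg_of_mem_Icc
    ⟨by linarith [Real.pi_pos], hθ1⟩
  have hk1norm : ‖k₁‖ = R := by
    simp [hk₁, Complex.norm_exp, abs_of_pos hR0]
  have hk1im : k₁.im = R * Real.sin θ := by simp [hk₁, Complex.exp_im, mul_comm]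
  have hk1re : k₁.re = R * Real.cos θ := by simp [hk₁, Complex.exp_re]
  have hqim : 0 ≤ q.im := by
    have : q.im = k₁.re * k₁.im + k₁.im * k₁.re := by
      rw [hqdef, sq k₁]
      simp [Complex.mul_im, ← Complex.ofReal_pow]
    rw [this, hk1re, hk1im]
    positivity
  have hRk : 0 < R ^ 2 - k₂ ^ 2 := by nlinarith [abs_nonneg k₂, _root_.sq_abs k₂, hR]
  have hqnorm : R ^ 2 - k₂ ^ 2 ≤ ‖q‖ := by
    have h1 : ‖k₁ ^ 2‖ = R ^ 2 := by rw [norm_pow, hk1norm]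
    have h2 : ‖((k₂ : ℂ)) ^ 2‖ = k₂ ^ 2 := by
      rw [norm_pow, Complex.norm_real, Real.norm_eq_abs, _root_.sq_abs]
    have h3 : ‖k₁ ^ 2‖ ≤ ‖q‖ + ‖((k₂ : ℂ)) ^ 2‖ := by
      calc ‖k₁ ^ 2‖ = ‖q - ((k₂ : ℂ)) ^ 2‖ := by rw [hqdef]; ring_nf
        _ ≤ ‖q‖ + ‖((k₂ : ℂ)) ^ 2‖ := norm_sub_le _ _
    linarith
  have hqpos : 0 < ‖q‖ := lt_of_lt_of_le hRk hqnorm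
  have hq : q ≠ 0 := by intro h0; rw [h0] at hqpos; simp at hqpos
  -- rewrite inner integral via integration by parts
  show ‖Complex.exp (Complex.I * k₁ * (x₁ : ℂ) - Complex.I * q * (t : ℂ)) * k₁ *
      (∫ t' in t..T, Complex.exp (Complex.I * q * (t' : ℂ)) * h t') * (Complex.I * k₁)‖ ≤ _
  rw [parts_aux T t hT ht0 htT h hh q hq]
  set A := Complex.exp (Complex.I * q * (T : ℂ)) * h T with hA
  set B := Complex.exp (Complex.I * q * (t : ℂ)) * h t with hB
  set K := ∫ t' in t..T, Complex.exp (Complex.I * q * (t' : ℂ)) * f' t' with hK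
  set If' := ∫ u in t..T, ‖f' u‖ with hIf'
  have hIf0 : 0 ≤ If' :=
    intervalIntegral.integral_nonneg htT (fun u _ => norm_nonneg _)
  have hEnorm : ‖Complex.exp (Complex.I * k₁ * (x₁ : ℂ) - Complex.I * q * (t : ℂ))‖
      = Real.exp (-(k₁.im * x₁) + q.im * t) := by
    rw [Complex.norm_exp]
    congr 1
    simp [Complex.mul_re]
  have hsnorm : ∀ s : ℝ, ‖Complex.exp (Complex.I * q * (s : ℂ))‖ = Real.exp (-(q.im * s)) := by
    intro s
    rw [Complex.norm_exp]
    congr 1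
    simp [Complex.mul_re]
  have hcf'2 : ContinuousOn f' (Icc t T) :=
    (hh.continuousOn_derivWithin (uniqueDiffOn_Icc hT) le_rfl).mono (Icc_subset_Icc ht0 le_rfl)
  have hKb : ‖K‖ ≤ Real.exp (-(q.im * t)) * If' := by
    calc ‖K‖ ≤ ∫ u in t..T, ‖Complex.exp (Complex.I * q * (u : ℂ)) * f' u‖ :=
        intervalIntegral.norm_integral_le_integral_norm htT
      _ ≤ ∫ u in t..T, Real.exp (-(q.im * t)) * ‖f' u‖ := by
          apply intervalIntegral.integral_mono_on htT ?_ ?_ ?_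
          · apply ContinuousOn.intervalIntegrable
            rw [uIcc_of_le htT]
            exact ((cont_exp_aux q).continuousOn.mul hcf'2).norm
          · apply ContinuousOn.intervalIntegrable
            rw [uIcc_of_le htT]
            exact continuousOn_const.mul hcf'2.norm
          · intro u hu
            rw [norm_mul, hsnorm u]
            apply mul_le_mul_of_nonneg_right ?_ (norm_nonneg _)
            apply Real.exp_le_exp.2
            nlinarith [hu.1, hqim]
      _ = Real.exp (-(q.im * t)) * If' := by
          rw [hIf']
          exact intervalIntegral.integral_const_mul _ _
  have hABK : ‖A - B - K‖ ≤ Real.exp (-(q.im * T)) * ‖h T‖ + Real.exp (-(q.im * t)) * ‖h t‖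
      + Real.exp (-(q.im * t)) * If' := by
    have hAn : ‖A‖ = Real.exp (-(q.im * T)) * ‖h T‖ := by rw [hA, norm_mul, hsnorm]
    have hBn : ‖B‖ = Real.exp (-(q.im * t)) * ‖h t‖ := by rw [hB, norm_mul, hsnorm]
    calc ‖A - B - K‖ ≤ ‖A - B‖ + ‖K‖ := norm_sub_le _ _
      _ ≤ ‖A‖ + ‖B‖ + ‖K‖ := by
          have := norm_sub_le A B
          linarith
      _ ≤ _ := by rw [hAn, hBn]; linarith
  have hnormeq : ‖Complex.exp (Complex.I * k₁ * (x₁ : ℂ) - Complex.I * q * (t : ℂ)) * k₁ *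
      ((A - B - K) / (Complex.I * q)) * (Complex.I * k₁)‖
      = Real.exp (-(k₁.im * x₁) + q.im * t) * R * (‖A - B - K‖ / ‖q‖) * R := by
    simp only [norm_mul, norm_div, hEnorm, hk1norm, Complex.norm_I, one_mul]
  rw [hnormeq]
  have hjordan : Real.exp (-(k₁.im * x₁)) ≤ Real.exp (-(2 * R * x₁ / π) * θ) := by
    apply Real.exp_le_exp.2
    have jp := Real.mul_le_sin hθ0 hθ1
    have h2 : (R * x₁) * (2 / π * θ) ≤ (R * x₁) * Real.sin θ :=
      mul_le_mul_of_nonneg_left jp (by positivity)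
    have h3 : -(2 * R * x₁ / π) * θ = -((R * x₁) * (2 / π * θ)) := by ring
    rw [hk1im, h3]
    nlinarith
  calc Real.exp (-(k₁.im * x₁) + q.im * t) * R * (‖A - B - K‖ / ‖q‖) * R
      = (R * R / ‖q‖) * (Real.exp (-(k₁.im * x₁) + q.im * t) * ‖A - B - K‖) := by ring
    _ ≤ (R * R / ‖q‖) * (Real.exp (-(k₁.im * x₁)) * (‖h T‖ + ‖h t‖ + If')) := by
        apply mul_le_mul_of_nonneg_left ?_ (by positivity)
        have e1 : Real.exp (-(k₁.im * x₁) + q.im * t) * Real.exp (-(q.im * T))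
            ≤ Real.exp (-(k₁.im * x₁)) := by
          rw [← Real.exp_add]
          apply Real.exp_le_exp.2
          nlinarith
        have e2 : Real.exp (-(k₁.im * x₁) + q.im * t) * Real.exp (-(q.im * t))
            = Real.exp (-(k₁.im * x₁)) := by
          rw [← Real.exp_add]
          congr 1
          ring
        calc Real.exp (-(k₁.im * x₁) + q.im * t) * ‖A - B - K‖
            ≤ Real.exp (-(k₁.im * x₁) + q.im * t) *
              (Real.exp (-(q.im * T)) * ‖h T‖ + Real.exp (-(q.im * t)) * ‖h t‖
                + Real.exp (-(q.im * t)) * If') :=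
              mul_le_mul_of_nonneg_left hABK (Real.exp_nonneg _)
          _ = (Real.exp (-(k₁.im * x₁) + q.im * t) * Real.exp (-(q.im * T))) * ‖h T‖
              + (Real.exp (-(k₁.im * x₁) + q.im * t) * Real.exp (-(q.im * t))) * ‖h t‖
              + (Real.exp (-(k₁.im * x₁) + q.im * t) * Real.exp (-(q.im * t))) * If' := by
              ring
          _ ≤ Real.exp (-(k₁.im * x₁)) * ‖h T‖ + Real.exp (-(k₁.im * x₁)) * ‖h t‖
              + Real.exp (-(k₁.im * x₁)) * If' := by
              rw [e2]
              have := mul_le_mul_of_nonneg_right e1 (norm_nonneg (h T))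
              linarith
          _ = Real.exp (-(k₁.im * x₁)) * (‖h T‖ + ‖h t‖ + If') := by ring
    _ ≤ (R ^ 2 / (R ^ 2 - k₂ ^ 2)) * (Real.exp (-(2 * R * x₁ / π) * θ) * (‖h T‖ + ‖h t‖ + If')) := by
        apply mul_le_mul ?_ ?_ (by positivity) (by positivity)
        · rw [show R * R = R ^ 2 by ring]
          exact div_le_div_of_nonneg_left (by positivity) hRk hqnorm
        · exact mul_le_mul_of_nonneg_right hjordan (by positivity)
    _ = (‖h T‖ + ‖h t‖ + If') * (R ^ 2 / (R ^ 2 - k₂ ^ 2)) *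
        Real.exp (-(2 * R * x₁ / π) * θ) := by ring

lemma exp_integral_aux (c : ℝ) (hc : 0 < c) :
    ∫ θ in (0:ℝ)..(π / 2), Real.exp (-(2 * c / π) * θ) =
      π / (2 * c) * (1 - Real.exp (-c)) := by
  have hπ : (0:ℝ) < π := Real.pi_pos
  have ha0 : -(2 * c / π) ≠ 0 := by
    have : (0:ℝ) < 2 * c / π := by positivity
    linarith
  have hd : ∀ θ : ℝ, HasDerivAt (fun s : ℝ => Real.exp (-(2 * c / π) * s) / (-(2 * c / π)))
      (Real.exp (-(2 * c / π) * θ)) θ := by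
    intro θ
    have := (((hasDerivAt_id θ).const_mul (-(2 * c / π))).exp).div_const (-(2 * c / π))
    rw [mul_one, mul_div_cancel_right₀ _ ha0] at this
    exact this
  rw [intervalIntegral.integral_eq_sub_of_hasDerivAt (fun θ _ => hd θ)
    ((Real.continuous_exp.comp (continuous_const.mul continuous_id)).intervalIntegrable _ _)]
  have harg : -(2 * c / π) * (π / 2) = -c := by field_simp
  rw [harg]
  field_simp
  rw [mul_zero, zero_div, neg_zero, Real.exp_zero]; ring

lemma main_bound_aux (T k₂ x₁ t : ℝ) (hT : 0 < T) (hx₁ : 0 < x₁)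
    (ht0 : 0 ≤ t) (htT : t ≤ T) (h : ℝ → ℂ) (hh : ContDiffOn ℝ 1 h (Icc 0 T))
    (R : ℝ) (hR : |k₂| < R) :
    ‖arcIntegral k₂ x₁ t T h R‖ ≤
      (‖h T‖ + ‖h t‖ + ∫ u in t..T, ‖derivWithin h (Icc 0 T) u‖) *
        (R ^ 2 / (R ^ 2 - k₂ ^ 2)) *
        (π / (2 * R * x₁) * (1 - Real.exp (-(R * x₁)))) := by
  have hπ : (0:ℝ) < π := Real.pi_pos
  have hR0 : 0 < R := lt_of_le_of_lt (abs_nonneg k₂) hR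
  have hRk : 0 < R ^ 2 - k₂ ^ 2 := by nlinarith [abs_nonneg k₂, _root_.sq_abs k₂]
  have hc : 0 < R * x₁ := by positivity
  set f' := derivWithin h (Icc 0 T) with hf'
  set C₀ : ℝ := ‖h T‖ + ‖h t‖ + ∫ u in t..T, ‖f' u‖ with hC₀
  have hitT : 0 ≤ ∫ u in t..T, ‖f' u‖ :=
    intervalIntegral.integral_nonneg htT (fun u _ => norm_nonneg _)
  have hC₀nn : 0 ≤ C₀ := by
    rw [hC₀]; linarith [norm_nonneg (h T), norm_nonneg (h t)]
  have hgint : IntervalIntegrable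
      (fun θ => C₀ * (R ^ 2 / (R ^ 2 - k₂ ^ 2)) * Real.exp (-(2 * R * x₁ / π) * θ))
      volume 0 (π / 2) := by
    apply Continuous.intervalIntegrable
    exact continuous_const.mul (Real.continuous_exp.comp (continuous_const.mul continuous_id))
  have hb : ‖arcIntegral k₂ x₁ t T h R‖ ≤
      |∫ θ in (0:ℝ)..(π / 2),
        C₀ * (R ^ 2 / (R ^ 2 - k₂ ^ 2)) * Real.exp (-(2 * R * x₁ / π) * θ)| := by
    rw [arcIntegral]
    refine le_trans ?_ (le_abs_self _)
    apply intervalIntegral.norm_integral_le_of_norm_le (by positivity) ?_ hgint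
    refine Filter.Eventually.of_forall fun θ hθ => ?_
    exact pointwise_bound T k₂ x₁ t hT hx₁ ht0 htT h hh R θ hR hθ.1.le hθ.2
  have hval : ∫ θ in (0:ℝ)..(π / 2), Real.exp (-(2 * R * x₁ / π) * θ) =
      π / (2 * (R * x₁)) * (1 - Real.exp (-(R * x₁))) := by
    have heq : (fun θ : ℝ => Real.exp (-(2 * R * x₁ / π) * θ)) =
        fun θ : ℝ => Real.exp (-(2 * (R * x₁) / π) * θ) := by
      funext θ; ring_nf
    rw [heq, exp_integral_aux (R * x₁) hc]
  have hexple : Real.exp (-(R * x₁)) ≤ 1 := by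
    rw [show (1:ℝ) = Real.exp 0 from (Real.exp_zero).symm]
    exact Real.exp_le_exp.2 (by linarith)
  have hgval : (∫ θ in (0:ℝ)..(π / 2),
      C₀ * (R ^ 2 / (R ^ 2 - k₂ ^ 2)) * Real.exp (-(2 * R * x₁ / π) * θ)) =
      C₀ * (R ^ 2 / (R ^ 2 - k₂ ^ 2)) *
        (π / (2 * (R * x₁)) * (1 - Real.exp (-(R * x₁)))) := by
    rw [intervalIntegral.integral_const_mul, hval]
  have hgnn : 0 ≤ C₀ * (R ^ 2 / (R ^ 2 - k₂ ^ 2)) *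
      (π / (2 * (R * x₁)) * (1 - Real.exp (-(R * x₁)))) := by
    have h1 : 0 ≤ 1 - Real.exp (-(R * x₁)) := by linarith
    have h2 : 0 ≤ π / (2 * (R * x₁)) := by positivity
    have h3 : 0 ≤ R ^ 2 / (R ^ 2 - k₂ ^ 2) := by positivity
    positivity
  rw [hgval, _root_.abs_of_nonneg hgnn] at hb
  calc ‖arcIntegral k₂ x₁ t T h R‖ ≤ _ := hb
    _ = C₀ * (R ^ 2 / (R ^ 2 - k₂ ^ 2)) *
        (π / (2 * R * x₁) * (1 - Real.exp (-(R * x₁)))) := by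
      rw [show 2 * (R * x₁) = 2 * R * x₁ from by ring]

end Aux

/-- Quarter-circle decay lemma: for `h` of class `C¹` on `[0,T]`, `x₁ > 0`,
`0 ≤ t ≤ T` and `R > |k₂|`, the quarter-circle contour integral is bounded by
`C(h) · R²/(R²-k₂²) · (π/(2Rx₁))(1 - e^{-Rx₁})` with
`C(h) = 2 sup_{[0,T]} ‖h‖ + ∫₀^T ‖h'‖`; in particular it tends to `0` as `R → ∞`. -/
theorem quarter_circle_decay (T k₂ x₁ t : ℝ) (hT : 0 < T) (hx₁ : 0 < x₁)
    (ht0 : 0 ≤ t) (htT : t ≤ T) (h : ℝ → ℂ) (hh : ContDiffOn ℝ 1 h (Icc 0 T)) :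
    (∀ R : ℝ, |k₂| < R →
      ‖arcIntegral k₂ x₁ t T h R‖ ≤
        (2 * (⨆ u : Icc (0:ℝ) T, ‖h u‖) +
            ∫ u in (0:ℝ)..T, ‖derivWithin h (Icc 0 T) u‖) *
          (R ^ 2 / (R ^ 2 - k₂ ^ 2)) *
          (π / (2 * R * x₁) * (1 - Real.exp (-(R * x₁))))) ∧
    Tendsto (fun R : ℝ => arcIntegral k₂ x₁ t T h R) atTop (𝓝 0) := by
  set f' := derivWithin h (Icc 0 T) with hf'
  set S : ℝ := ⨆ u : Icc (0:ℝ) T, ‖h u‖ with hS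
  set C : ℝ := 2 * S + ∫ u in (0:ℝ)..T, ‖f' u‖ with hC
  have hbdd : BddAbove (range fun u : Icc (0:ℝ) T => ‖h u‖) := by
    have h1 : ContinuousOn (fun u => ‖h u‖) (Icc 0 T) := hh.continuousOn.norm
    have h2 := (isCompact_Icc.image_of_continuousOn h1).bddAbove
    rwa [Set.image_eq_range] at h2
  have hTle : ‖h T‖ ≤ S := le_ciSup hbdd ⟨T, le_of_lt hT, le_rfl⟩
  have htle : ‖h t‖ ≤ S := le_ciSup hbdd ⟨t, ht0, htT⟩
  have hcf' : ContinuousOn f' (Icc 0 T) :=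
    hh.continuousOn_derivWithin (uniqueDiffOn_Icc hT) le_rfl
  have i0t : IntervalIntegrable (fun u => ‖f' u‖) MeasureTheory.volume 0 t := by
    apply ContinuousOn.intervalIntegrable
    rw [uIcc_of_le ht0]
    exact (hcf'.mono (Icc_subset_Icc le_rfl htT)).norm
  have itT : IntervalIntegrable (fun u => ‖f' u‖) MeasureTheory.volume t T := by
    apply ContinuousOn.intervalIntegrable
    rw [uIcc_of_le htT]
    exact (hcf'.mono (Icc_subset_Icc ht0 le_rfl)).norm
  have hIle : (∫ u in t..T, ‖f' u‖) ≤ ∫ u in (0:ℝ)..T, ‖f' u‖ := by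
    have hsplit := intervalIntegral.integral_add_adjacent_intervals i0t itT
    have h0t : 0 ≤ ∫ u in (0:ℝ)..t, ‖f' u‖ :=
      intervalIntegral.integral_nonneg ht0 (fun u _ => norm_nonneg _)
    linarith
  have hC0 : ‖h T‖ + ‖h t‖ + (∫ u in t..T, ‖f' u‖) ≤ C := by
    rw [hC]; linarith
  have hCnn : 0 ≤ C := by
    have hS0 : 0 ≤ S := le_trans (norm_nonneg (h T)) hTle
    have h0T : 0 ≤ ∫ u in (0:ℝ)..T, ‖f' u‖ :=
      intervalIntegral.integral_nonneg (le_of_lt hT) (fun u _ => norm_nonneg _)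
    rw [hC]; linarith
  have key : ∀ R : ℝ, |k₂| < R → ‖arcIntegral k₂ x₁ t T h R‖ ≤
      C * (R ^ 2 / (R ^ 2 - k₂ ^ 2)) *
        (π / (2 * R * x₁) * (1 - Real.exp (-(R * x₁)))) := by
    intro R hR
    have hR0 : 0 < R := lt_of_le_of_lt (abs_nonneg k₂) hR
    have hRk : 0 < R ^ 2 - k₂ ^ 2 := by nlinarith [abs_nonneg k₂, _root_.sq_abs k₂]
    have hexple : Real.exp (-(R * x₁)) ≤ 1 := by
      rw [show (1:ℝ) = Real.exp 0 from (Real.exp_zero).symm]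
      exact Real.exp_le_exp.2 (by nlinarith)
    have h1 := main_bound_aux T k₂ x₁ t hT hx₁ ht0 htT h hh R hR
    refine h1.trans ?_
    apply mul_le_mul_of_nonneg_right (mul_le_mul_of_nonneg_right hC0 (by positivity))
    have : 0 ≤ π / (2 * R * x₁) := by positivity
    have h2 : 0 ≤ 1 - Real.exp (-(R * x₁)) := by linarith
    positivity
  refine ⟨key, ?_⟩
  apply squeeze_zero_norm' (a := fun R => C * π / x₁ / R) ?_ ?_
  · filter_upwards [eventually_ge_atTop (2 * |k₂| + 1)] with R hR1
    have hR : |k₂| < R := by linarith [abs_nonneg k₂]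
    have hR0 : 0 < R := lt_of_le_of_lt (abs_nonneg k₂) hR
    have hRk : 0 < R ^ 2 - k₂ ^ 2 := by nlinarith [abs_nonneg k₂, _root_.sq_abs k₂]
    have hM2 : R ^ 2 / (R ^ 2 - k₂ ^ 2) ≤ 2 := by
      rw [div_le_iff₀ hRk]
      nlinarith [abs_nonneg k₂, _root_.sq_abs k₂]
    have hexple : Real.exp (-(R * x₁)) ≤ 1 := by
      rw [show (1:ℝ) = Real.exp 0 from (Real.exp_zero).symm]
      exact Real.exp_le_exp.2 (by nlinarith)
    have hexpnn : 0 ≤ Real.exp (-(R * x₁)) := Real.exp_nonneg _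
    have hXnn : 0 ≤ π / (2 * R * x₁) := by positivity
    calc ‖arcIntegral k₂ x₁ t T h R‖
        ≤ C * (R ^ 2 / (R ^ 2 - k₂ ^ 2)) *
          (π / (2 * R * x₁) * (1 - Real.exp (-(R * x₁)))) := key R hR
      _ ≤ C * 2 * (π / (2 * R * x₁) * 1) := by
          apply mul_le_mul (mul_le_mul_of_nonneg_left hM2 hCnn) ?_ ?_ (by positivity)
          · apply mul_le_mul_of_nonneg_left (by linarith) hXnn
          · have h2 : 0 ≤ 1 - Real.exp (-(R * x₁)) := by linarith
            positivity
      _ = C * π / x₁ / R := by field_simp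
  · have h1 : Tendsto (fun R : ℝ => (C * π / x₁) * R⁻¹) atTop (𝓝 ((C * π / x₁) * 0)) :=
      tendsto_inv_atTop_zero.const_mul _
    simpa [div_eq_mul_inv] using h1
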